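/- If S ⋖ T is a covering relation in the type B_n Tamari lattice, then the bracket vectors of S and T agree in all but exactly one coordinate. -/

import Mathlib

/-- Condition (i) for type `B_n` bracket vectors: for `i < j` (0-based),
if `r_j - (j-i)` is a nonnegative integer then `r_i ≤ r_j - (j-i)`
(equivalently `r_i + (j-i) ≤ r_j`; when `r_j = ∞` this holds trivially,
matching the convention that `∞` minus an integer is `∞`). -/
def condIB (n : ℕ) (r : Fin n → ℕ∞) : Prop :=
  ∀ i j : Fin n, i < j → (((j : ℕ) - (i : ℕ) : ℕ) : ℕ∞) ≤ r j →
    r i + (((j : ℕ) - (i : ℕ) : ℕ) : ℕ∞) ≤ r j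

/-- Condition (ii) for type `B_n` bracket vectors: if `∞ > r_i ≥ i`
(1-based; here `i = k+1` for the 0-based index `k`) then `r_{n+i-r_i} = ∞`. -/
def condIIB (n : ℕ) (r : Fin n → ℕ∞) : Prop :=
  ∀ (k : Fin n) (t : ℕ), r k = (t : ℕ∞) → ∀ _ht : (k : ℕ) + 1 ≤ t,
    r ⟨n + (k : ℕ) - t, by have := k.isLt; omega⟩ = ⊤

/-- Entries lie in `{0, …, n-1} ∪ {∞}`. -/
def entriesB (n : ℕ) (r : Fin n → ℕ∞) : Prop :=
  ∀ k, r k = ⊤ ∨ r k ≤ ((n - 1 : ℕ) : ℕ∞)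

/-- A type `B_n` bracket vector. -/
def isBVec (n : ℕ) (r : Fin n → ℕ∞) : Prop :=
  entriesB n r ∧ condIB n r ∧ condIIB n r

/-- If `S ⋖ T` is a covering relation in the type `B_n` Tamari lattice, then
the bracket vectors of `S` and `T` agree in all but exactly one coordinate. -/
theorem tamariB_cover_one_coordinate (n : ℕ) (r s : Fin n → ℕ∞)
    (hr : isBVec n r) (hs : isBVec n s) (hlt : r < s)
    (hcov : ∀ c : Fin n → ℕ∞, isBVec n c → ¬(r < c ∧ c < s)) :
    ∃! k : Fin n, r k ≠ s k := by
  have hle : r ≤ s := hlt.le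
  have hne : r ≠ s := hlt.ne
  have hDne : (Finset.univ.filter (fun k => r k ≠ s k)).Nonempty := by
    rcases Function.ne_iff.mp hne with ⟨k, hk⟩
    exact ⟨k, by simp [hk]⟩
  set k := (Finset.univ.filter (fun k => r k ≠ s k)).max' hDne with hkdef
  clear_value k
  have hkD := hkdef ▸ Finset.max'_mem _ hDne
  rw [Finset.mem_filter] at hkD
  have hkne : r k ≠ s k := hkD.2
  have hkmax : ∀ m, r m ≠ s m → m ≤ k := fun m hm =>
    hkdef ▸ Finset.le_max' _ m (by simp [hm])
  have hagree : ∀ m, k < m → r m = s m := by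
    intro m hm
    by_contra h
    exact absurd (hkmax m h) (not_le.mpr hm)
  have hrks : r k < s k := lt_of_le_of_ne (hle k) hkne
  refine ⟨k, hkne, ?_⟩
  intro m hm
  by_contra hmk
  set c := Function.update r k (s k) with hc
  have hck : c k = s k := Function.update_self _ _ _
  have hcm : ∀ j, j ≠ k → c j = r j := fun j hj => Function.update_of_ne hj _ _
  -- c is a bracket vector
  have hcvec : isBVec n c := by
    refine ⟨?_, ?_, ?_⟩
    · intro q
      by_cases hq : q = k
      · rw [hq, hck]; exact hs.1 k
      · rw [hcm q hq]; exact hr.1 q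
    · intro i j hij hd
      by_cases hjk : j = k
      · have hik : i ≠ k := hjk ▸ ne_of_lt hij
        rw [hjk, hck] at hd ⊢
        rw [hcm i hik]
        have hik' : i < k := hjk ▸ hij
        calc r i + _ ≤ s i + _ := add_le_add (hle i) (le_refl _)
          _ ≤ s k := hs.2.1 i k hik' hd
      · rw [hcm j hjk] at hd ⊢
        by_cases hik : i = k
        · rw [hik] at hd ⊢
          rw [hck]
          have hkj : k < j := hik ▸ hij
          have hrsj : r j = s j := hagree j hkj
          rw [hrsj] at hd ⊢
          exact hs.2.1 k j hkj hd
        · rw [hcm i hik]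
          exact hr.2.1 i j hij hd
    · intro q t hqt ht
      have htn : t ≤ n - 1 := by
        by_cases hq : q = k
        · rcases hs.1 k with h | h
          · rw [hq, hck, h] at hqt; exact absurd hqt (by simp)
          · rw [hq, hck] at hqt; rw [hqt] at h; exact_mod_cast h
        · rcases hr.1 q with h | h
          · rw [hcm q hq, h] at hqt; exact absurd hqt (by simp)
          · rw [hcm q hq] at hqt; rw [hqt] at h; exact_mod_cast h
      by_cases hq : q = k
      · subst hq
        rw [hck] at hqt
        have hstop := hs.2.2 q t hqt ht
        have hpk : (⟨n + (q : ℕ) - t, by have := q.isLt; omega⟩ : Fin n) ≠ q := by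
          intro h
          have h2 : n + (q : ℕ) - t = (q : ℕ) := congrArg Fin.val h
          have hqlt := q.isLt
          omega
        rw [hcm _ hpk]
        rw [hagree _ (show q < ⟨n + (q : ℕ) - t, by have := q.isLt; omega⟩ from by
          rw [Fin.lt_def]
          show (q : ℕ) < n + (q : ℕ) - t
          have := q.isLt; omega)]
        exact hstop
      · rw [hcm q hq] at hqt
        have hrtop := hr.2.2 q t hqt ht
        have hpk : (⟨n + (q : ℕ) - t, by have := q.isLt; omega⟩ : Fin n) ≠ k := by
          intro h
          rw [h] at hrtop
          rw [hrtop] at hrks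
          exact absurd hrks (by simp)
        rw [hcm _ hpk]
        exact hrtop
  -- r < c < s
  have hrc : r < c := by
    constructor
    · intro j
      by_cases hj : j = k
      · rw [hj, hck]; exact hle k
      · rw [hcm j hj]
    · intro h
      have := h k
      rw [hck] at this
      exact absurd this (not_le.mpr hrks)
  have hcs : c < s := by
    constructor
    · intro j
      by_cases hj : j = k
      · rw [hj, hck]
      · rw [hcm j hj]; exact hle j
    · intro h
      have := h m
      rw [hcm m hmk] at this
      exact hm (le_antisymm (hle m) this)
  exact hcov c hcvec ⟨hrc, hcs⟩
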